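/- Fixed point theorem: Let (N,d) be a complete global Alexandrov NPC space and T:N→N a nonexpansive mapping. If some point p ∈ N has bounded orbit {p, Tp, T²p, …}, then T has a fixed point q lying in the closed convex hull of the orbit of p. -/

import Mathlib

open Set

/-- A (constant-speed, unit-interval) geodesic from `p` to `q`. -/
def IsGeodesic {N : Type*} [MetricSpace N] (γ : ℝ → N) (p q : N) : Prop :=
  γ 0 = p ∧ γ 1 = q ∧
    ∀ s ∈ Icc (0:ℝ) 1, ∀ t ∈ Icc (0:ℝ) 1, dist (γ s) (γ t) = |s - t| * dist p q

/-- A geodesic length space: any two points are joined by a geodesic. -/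
def GeodesicSpace (N : Type*) [MetricSpace N] : Prop :=
  ∀ p q : N, ∃ γ : ℝ → N, IsGeodesic γ p q

/-- Global Alexandrov NPC (CAT(0)) space. -/
def NPCSpace (N : Type*) [MetricSpace N] : Prop :=
  GeodesicSpace N ∧
    ∀ (p q r : N) (γ : ℝ → N), IsGeodesic γ p r → ∀ t ∈ Icc (0:ℝ) 1,
      dist q (γ t) ^ 2 ≤
        (1 - t) * dist q p ^ 2 + t * dist q r ^ 2 - t * (1 - t) * dist p r ^ 2

/-- A subset is convex if any two of its points are joined by a geodesic lying in the set. -/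
def ConvexSubset {N : Type*} [MetricSpace N] (C : Set N) : Prop :=
  ∀ p ∈ C, ∀ q ∈ C, ∃ γ : ℝ → N, IsGeodesic γ p q ∧ ∀ t ∈ Icc (0:ℝ) 1, γ t ∈ C

/-- `C` is the convex hull of `S`: the smallest convex subset containing `S`. -/
def IsConvexHull {N : Type*} [MetricSpace N] (S C : Set N) : Prop :=
  ConvexSubset C ∧ S ⊆ C ∧ ∀ D : Set N, ConvexSubset D → S ⊆ D → C ⊆ D
open Filter Topology

lemma aux_le_of_sq_le_sq {a b : ℝ} (ha : 0 ≤ a) (hb : 0 ≤ b) (h : a^2 ≤ b^2) : a ≤ b := by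
  nlinarith

lemma IsGeodesic.reverse {N : Type*} [MetricSpace N] {γ : ℝ → N} {p q : N}
    (h : IsGeodesic γ p q) : IsGeodesic (fun t => γ (1 - t)) q p := by
  obtain ⟨h0, h1, hd⟩ := h
  refine ⟨by simpa using h1, by simpa using h0, fun s hs t ht => ?_⟩
  have hs' : 1 - s ∈ Icc (0:ℝ) 1 := ⟨by linarith [hs.2], by linarith [hs.1]⟩
  have ht' : 1 - t ∈ Icc (0:ℝ) 1 := ⟨by linarith [ht.2], by linarith [ht.1]⟩
  rw [hd _ hs' _ ht', dist_comm p q]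
  congr 1
  rw [show (1-s) - (1-t) = -(s - t) by ring, abs_neg]

lemma geodesic_comp_same_start {N : Type*} [MetricSpace N] (hN : NPCSpace N)
    {p q q' : N} {γ γ' : ℝ → N} (h : IsGeodesic γ p q) (h' : IsGeodesic γ' p q')
    {t : ℝ} (ht : t ∈ Icc (0:ℝ) 1) :
    dist (γ t) (γ' t) ≤ t * dist q q' := by
  have h1 := hN.2 p (γ t) q' γ' h' t ht
  have h2 := hN.2 p q' q γ h t ht
  have h0 : (0:ℝ) ∈ Icc (0:ℝ) 1 := ⟨le_refl 0, zero_le_one⟩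
  have hγt : dist (γ t) p = t * dist p q := by
    have := h.2.2 t ht 0 h0
    rw [h.1] at this
    rwa [show |t - 0| = t by rw [sub_zero, abs_of_nonneg ht.1]] at this
  rw [hγt, dist_comm (γ t) q'] at h1
  rw [dist_comm q' p, dist_comm q' q] at h2
  have key : dist (γ t) (γ' t) ^ 2 ≤ (t * dist q q')^2 := by
    have h2' := mul_le_mul_of_nonneg_left h2 ht.1
    nlinarith [h1, h2']
  exact aux_le_of_sq_le_sq dist_nonneg (mul_nonneg ht.1 dist_nonneg) key

lemma geodesic_comp {N : Type*} [MetricSpace N] (hN : NPCSpace N)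
    {p q p' q' : N} {γ γ' : ℝ → N} (h : IsGeodesic γ p q) (h' : IsGeodesic γ' p' q')
    {t : ℝ} (ht : t ∈ Icc (0:ℝ) 1) :
    dist (γ t) (γ' t) ≤ (1 - t) * dist p p' + t * dist q q' := by
  obtain ⟨η, hη⟩ := hN.1 p q'
  have A : dist (γ t) (η t) ≤ t * dist q q' :=
    geodesic_comp_same_start hN h hη ht
  have ht' : 1 - t ∈ Icc (0:ℝ) 1 := ⟨by linarith [ht.2], by linarith [ht.1]⟩
  have B : dist (η t) (γ' t) ≤ (1 - t) * dist p p' := by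
    have := geodesic_comp_same_start hN hη.reverse h'.reverse ht'
    simpa [show 1 - (1 - t) = t by ring] using this
  calc dist (γ t) (γ' t) ≤ dist (γ t) (η t) + dist (η t) (γ' t) := dist_triangle _ _ _
    _ ≤ t * dist q q' + (1 - t) * dist p p' := add_le_add A B
    _ = (1 - t) * dist p p' + t * dist q q' := by ring

lemma closure_convex {N : Type*} [MetricSpace N] [CompleteSpace N] (hN : NPCSpace N)
    {C : Set N} (hconv : ConvexSubset C) : ConvexSubset (closure C) := by
  intro a ha b hb
  obtain ⟨u, hu, hua⟩ := mem_closure_iff_seq_limit.1 ha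
  obtain ⟨v, hv, hvb⟩ := mem_closure_iff_seq_limit.1 hb
  choose Γ hΓ hΓC using fun n => hconv (u n) (hu n) (v n) (hv n)
  set π : ℝ → ℝ := fun t => max 0 (min t 1) with hπ
  have hπmem : ∀ t, π t ∈ Icc (0:ℝ) 1 := fun t =>
    ⟨le_max_left _ _, max_le zero_le_one (min_le_right _ _)⟩
  have hπid : ∀ t ∈ Icc (0:ℝ) 1, π t = t := by
    intro t ht; simp [hπ, min_eq_left ht.2, max_eq_right ht.1]
  have hcauchy : ∀ t, CauchySeq (fun n => Γ n (π t)) := by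
    intro t
    have hcu := hua.cauchySeq
    have hcv := hvb.cauchySeq
    rw [Metric.cauchySeq_iff] at hcu hcv ⊢
    intro ε hε
    obtain ⟨K1, hK1⟩ := hcu (ε/2) (by linarith)
    obtain ⟨K2, hK2⟩ := hcv (ε/2) (by linarith)
    refine ⟨max K1 K2, fun m hm n hn => ?_⟩
    have h1 := hK1 m (le_trans (le_max_left _ _) hm) n (le_trans (le_max_left _ _) hn)
    have h2 := hK2 m (le_trans (le_max_right _ _) hm) n (le_trans (le_max_right _ _) hn)
    have := geodesic_comp hN (hΓ m) (hΓ n) (hπmem t)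
    have hp := hπmem t
    rw [dist_comm (u m) (u n), dist_comm (v m) (v n)] at this
    calc dist (Γ m (π t)) (Γ n (π t))
        ≤ (1 - π t) * dist (u n) (u m) + π t * dist (v n) (v m) := this
      _ ≤ 1 * dist (u n) (u m) + 1 * dist (v n) (v m) := by
          gcongr <;> [linarith [hp.1]; linarith [hp.2]] <;> skip
      _ < ε := by rw [one_mul, one_mul, dist_comm (u n) (u m), dist_comm (v n) (v m)]
                  linarith [h1, h2]
  have hlim : ∀ t, ∃ z, Tendsto (fun n => Γ n (π t)) atTop (𝓝 z) :=
    fun t => cauchySeq_tendsto_of_complete (hcauchy t)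
  choose γ hγ using hlim
  have hmem : ∀ t, γ t ∈ closure C := fun t =>
    mem_closure_of_tendsto (hγ t) (Eventually.of_forall fun n => hΓC n _ (hπmem t))
  have hdist : ∀ s ∈ Icc (0:ℝ) 1, ∀ t ∈ Icc (0:ℝ) 1,
      dist (γ s) (γ t) = |s - t| * dist a b := by
    intro s hs t ht
    have h1 : Tendsto (fun n => dist (Γ n (π s)) (Γ n (π t))) atTop (𝓝 (dist (γ s) (γ t))) :=
      ((hγ s).dist (hγ t))
    have h2 : Tendsto (fun n => dist (Γ n (π s)) (Γ n (π t))) atTop (𝓝 (|s - t| * dist a b)) := by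
      have : ∀ n, dist (Γ n (π s)) (Γ n (π t)) = |s - t| * dist (u n) (v n) := by
        intro n
        rw [hπid s hs, hπid t ht]
        exact (hΓ n).2.2 s hs t ht
      simp only [this]
      exact (tendsto_const_nhds).mul (hua.dist hvb)
    exact tendsto_nhds_unique h1 h2
  refine ⟨γ, ⟨?_, ?_, hdist⟩, fun t _ => hmem t⟩
  · have h1 : Tendsto (fun n => Γ n (π 0)) atTop (𝓝 (γ 0)) := hγ 0
    have h2 : Tendsto (fun n => Γ n (π 0)) atTop (𝓝 a) := by
      have : ∀ n, Γ n (π 0) = u n := by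
        intro n
        rw [hπid 0 ⟨le_refl 0, zero_le_one⟩]
        exact (hΓ n).1
      simpa only [this] using hua
    exact tendsto_nhds_unique h1 h2
  · have h1 : Tendsto (fun n => Γ n (π 1)) atTop (𝓝 (γ 1)) := hγ 1
    have h2 : Tendsto (fun n => Γ n (π 1)) atTop (𝓝 b) := by
      have : ∀ n, Γ n (π 1) = v n := by
        intro n
        rw [hπid 1 ⟨zero_le_one, le_refl 1⟩]
        exact (hΓ n).2.1
      simpa only [this] using hvb
    exact tendsto_nhds_unique h1 h2

lemma exists_minimizer {N : Type*} [MetricSpace N] [CompleteSpace N] {S : Set N}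
    (hScl : IsClosed S) (hne : S.Nonempty) (f : N → ℝ) (h0 : ∀ x, 0 ≤ f x)
    (hconv : ∀ x ∈ S, ∀ y ∈ S, ∃ m ∈ S, f m ≤ f x / 2 + f y / 2 - dist x y ^ 2 / 4)
    (hsc : ∀ (u : ℕ → N) (z : N) (c : ℝ), (∀ n, u n ∈ S) → Tendsto u atTop (𝓝 z) →
      (∀ n, f (u n) ≤ c) → f z ≤ c) :
    ∃ q ∈ S, ∀ x ∈ S, f q ≤ f x := by
  set μ := sInf (f '' S) with hμ
  have hbddb : BddBelow (f '' S) := ⟨0, fun y ⟨x, _, hx⟩ => hx ▸ h0 x⟩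
  have hne' : (f '' S).Nonempty := hne.image f
  have hμle : ∀ x ∈ S, μ ≤ f x := fun x hx => csInf_le hbddb ⟨x, hx, rfl⟩
  have hsel : ∀ n : ℕ, ∃ z, z ∈ S ∧ f z < μ + 1 / (n + 1) := by
    intro n
    have hpos : (0:ℝ) < 1 / (n + 1) := by positivity
    obtain ⟨a, ⟨z, hzS, rfl⟩, hlt⟩ := exists_lt_of_csInf_lt hne' (lt_add_of_pos_right μ hpos)
    exact ⟨z, hzS, hlt⟩
  choose y hyS hyf using hsel
  have hd2 : ∀ m n : ℕ, dist (y m) (y n) ^ 2 ≤ 2 * (1 / (m + 1)) + 2 * (1 / (n + 1)) := by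
    intro m n
    obtain ⟨w, hwS, hw⟩ := hconv _ (hyS m) _ (hyS n)
    have h1 := hμle w hwS
    have h2 := hyf m
    have h3 := hyf n
    linarith [h1, h2, h3, hw]
  have hone : ∀ k n : ℕ, k ≤ n → (1:ℝ) / (n + 1) ≤ 1 / (k + 1) := by
    intro k n hk
    apply div_le_div_of_nonneg_left (by norm_num) (by positivity)
    exact_mod_cast add_le_add_left (Nat.cast_le.2 hk) 1
  have hcauchy : CauchySeq y := by
    refine cauchySeq_of_le_tendsto_0 (fun k : ℕ => Real.sqrt (4 * (1 / (k + 1)))) ?_ ?_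
    · intro n m k hn hm
      have h1 : dist (y n) (y m) ^ 2 ≤ 4 * (1 / (k + 1)) := by
        have e1 := hone k n hn
        have e2 := hone k m hm
        have := hd2 n m
        linarith
      calc dist (y n) (y m) = Real.sqrt (dist (y n) (y m) ^ 2) :=
            (Real.sqrt_sq dist_nonneg).symm
        _ ≤ Real.sqrt (4 * (1 / (k + 1))) := Real.sqrt_le_sqrt h1
    · have hg : Tendsto (fun k : ℕ => 4 * (1 / ((k:ℝ) + 1))) atTop (𝓝 0) := by
        have h1 : Tendsto (fun k : ℕ => 1 / ((k:ℝ) + 1)) atTop (𝓝 0) :=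
          tendsto_one_div_add_atTop_nhds_zero_nat
        have := h1.const_mul (4:ℝ)
        simpa using this
      have := (Real.continuous_sqrt.tendsto' 0 0 (by simp)).comp hg
      simpa only [Function.comp_def] using this
  obtain ⟨q, hq⟩ := cauchySeq_tendsto_of_complete hcauchy
  have hqS : q ∈ S := hScl.mem_of_tendsto hq (Eventually.of_forall hyS)
  refine ⟨q, hqS, fun x hx => ?_⟩
  have hfq : f q ≤ μ := by
    apply le_of_forall_pos_le_add
    intro ε hε
    obtain ⟨K, hK⟩ := exists_nat_one_div_lt hε
    apply hsc (fun n => y (n + K)) q (μ + ε) (fun n => hyS _)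
      (hq.comp (tendsto_add_atTop_nat K))
    intro n
    have h1 := hyf (n + K)
    have h2 : (1:ℝ) / (↑(n + K) + 1) ≤ 1 / (K + 1) := by
      apply div_le_div_of_nonneg_left (by norm_num) (by positivity)
      push_cast
      linarith [Nat.cast_nonneg (α := ℝ) n]
    linarith [hK.le]
  exact hfq.trans (hμle x hx)

lemma limsup_div_two {ι : Type*} (F : Filter ι) [F.NeBot] (g : ι → ℝ)
    (hb : F.IsBoundedUnder (· ≤ ·) g) (hc : F.IsCoboundedUnder (· ≤ ·) g) :
    Filter.limsup (fun n => g n / 2) F = Filter.limsup g F / 2 :=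
  (Monotone.map_limsSup_of_continuousAt (F := F.map g) (f := fun x : ℝ => x / 2)
    (fun a b h => by dsimp; linarith) (by fun_prop) hb hc).symm

/-- Fixed point theorem: a nonexpansive map on a complete global
Alexandrov NPC space with a bounded orbit has a fixed point in the closed convex
hull of that orbit. -/
theorem npc_fixed_point_of_bounded_orbit {N : Type*} [MetricSpace N] [CompleteSpace N]
    (hN : NPCSpace N) (T : N → N)
    (hT : ∀ x y : N, dist (T x) (T y) ≤ dist x y)
    (p : N) (hbdd : Bornology.IsBounded (Set.range fun i : ℕ => T^[i] p))
    (C : Set N) (hC : IsConvexHull (Set.range fun i : ℕ => T^[i] p) C) :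
    ∃ q ∈ closure C, T q = q := by
  obtain ⟨hgeo, hnpc⟩ := hN
  set x : ℕ → N := fun i => T^[i] p with hx
  obtain ⟨B, hB⟩ := Metric.isBounded_iff.1 hbdd
  have hxr : ∀ n, x n ∈ Set.range (fun i : ℕ => T^[i] p) := fun n => ⟨n, rfl⟩
  have hxC : ∀ n, x n ∈ closure C := fun n => subset_closure (hC.2.1 (hxr n))
  have hBp : ∀ n, dist p (x n) ≤ B := fun n => hB (hxr 0) (hxr n)
  have hdb : ∀ z n, dist z (x n) ≤ dist z p + B := fun z n =>
    (dist_triangle z p (x n)).trans (by linarith [hBp n])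
  have hbound : ∀ z n, dist z (x n) ^ 2 ≤ (dist z p + B) ^ 2 := by
    intro z n
    have h1 := hdb z n
    nlinarith [@dist_nonneg _ _ z (x n)]
  set f : N → ℝ := fun z => Filter.limsup (fun n => dist z (x n) ^ 2) atTop with hf
  have hbd : ∀ z, Filter.IsBoundedUnder (· ≤ ·) atTop (fun n => dist z (x n) ^ 2) :=
    fun z => isBoundedUnder_of ⟨(dist z p + B) ^ 2, fun n => hbound z n⟩
  have hcb : ∀ z, Filter.IsCoboundedUnder (· ≤ ·) atTop (fun n => dist z (x n) ^ 2) :=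
    fun z => (isBoundedUnder_of ⟨0, fun n => sq_nonneg _⟩ :
      Filter.IsBoundedUnder (· ≥ ·) atTop _).isCoboundedUnder_le
  have hf0 : ∀ z, 0 ≤ f z := fun z =>
    le_limsup_of_frequently_le (Frequently.of_forall fun n => sq_nonneg _) (hbd z)
  -- monotone comparison helper
  have fle : ∀ (z y : N) (c : ℝ), (∀ n, dist z (x n) ^ 2 ≤ dist y (x n) ^ 2 + c) →
      f z ≤ f y + c := by
    intro z y c h
    have h1 : f z ≤ Filter.limsup (fun n => dist y (x n) ^ 2 + c) atTop :=
      limsup_le_limsup (Eventually.of_forall h) (hcb z)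
        (isBoundedUnder_of ⟨(dist y p + B) ^ 2 + c, fun n => add_le_add_left (hbound y n) c⟩)
    rwa [limsup_add_const atTop _ c (hbd y) (hcb y)] at h1
  -- convexity of f along geodesic midpoints
  have hhalf : (1/2 : ℝ) ∈ Icc (0:ℝ) 1 := by norm_num
  have fconv : ∀ (a b : N) (γ : ℝ → N), IsGeodesic γ a b →
      f (γ (1/2)) ≤ f a / 2 + f b / 2 - dist a b ^ 2 / 4 := by
    intro a b γ hγ
    have hpt : ∀ n, dist (γ (1/2)) (x n) ^ 2 ≤
        (dist a (x n) ^ 2 / 2 + dist b (x n) ^ 2 / 2) + -(dist a b ^ 2 / 4) := by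
      intro n
      have h1 := hnpc a (x n) b γ hγ (1/2) hhalf
      rw [dist_comm (x n) (γ (1/2)), dist_comm (x n) a, dist_comm (x n) b] at h1
      nlinarith [h1]
    have hbs : Filter.IsBoundedUnder (· ≤ ·) atTop
        (fun n => dist a (x n) ^ 2 / 2 + dist b (x n) ^ 2 / 2) :=
      isBoundedUnder_of ⟨(dist a p + B) ^ 2 / 2 + (dist b p + B) ^ 2 / 2,
        fun n => by have := hbound a n; have := hbound b n; linarith⟩
    have hcs : Filter.IsCoboundedUnder (· ≤ ·) atTop
        (fun n => dist a (x n) ^ 2 / 2 + dist b (x n) ^ 2 / 2) :=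
      (isBoundedUnder_of ⟨0, fun n => by positivity⟩ :
        Filter.IsBoundedUnder (· ≥ ·) atTop _).isCoboundedUnder_le
    have h1 : f (γ (1/2)) ≤ Filter.limsup
        (fun n => (dist a (x n) ^ 2 / 2 + dist b (x n) ^ 2 / 2) + -(dist a b ^ 2 / 4)) atTop :=
      limsup_le_limsup (Eventually.of_forall hpt) (hcb _)
        (isBoundedUnder_of ⟨(dist a p + B) ^ 2 / 2 + (dist b p + B) ^ 2 / 2 + -(dist a b ^ 2 / 4),
          fun n => by have := hbound a n; have := hbound b n; linarith⟩)
    rw [limsup_add_const atTop _ _ hbs hcs] at h1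
    have h2 : Filter.limsup (fun n => dist a (x n) ^ 2 / 2 + dist b (x n) ^ 2 / 2) atTop ≤
        f a / 2 + f b / 2 := by
      have h3 := limsup_add_le (f := atTop) (u := fun n => dist a (x n) ^ 2 / 2)
        (v := fun n => dist b (x n) ^ 2 / 2)
        (isBoundedUnder_of ⟨0, fun n => by positivity⟩)
        (isBoundedUnder_of ⟨(dist a p + B) ^ 2 / 2, fun n => by have := hbound a n; linarith⟩)
        ((isBoundedUnder_of ⟨0, fun n => by positivity⟩ :
          Filter.IsBoundedUnder (· ≥ ·) atTop _).isCoboundedUnder_le)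
        (isBoundedUnder_of ⟨(dist b p + B) ^ 2 / 2, fun n => by have := hbound b n; linarith⟩)
      rw [limsup_div_two atTop _ (hbd a) (hcb a), limsup_div_two atTop _ (hbd b) (hcb b)] at h3
      exact h3
    linarith
  -- shift inequality
  have fshift : ∀ z, f (T z) ≤ f z := by
    intro z
    have e : f (T z) = Filter.limsup (fun n => dist (T z) (x (n + 1)) ^ 2) atTop :=
      (limsup_nat_add (fun n => dist (T z) (x n) ^ 2) 1).symm
    rw [e]
    refine limsup_le_limsup (Eventually.of_forall fun n => ?_)
      ((isBoundedUnder_of ⟨0, fun n => sq_nonneg _⟩ :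
        Filter.IsBoundedUnder (· ≥ ·) atTop _).isCoboundedUnder_le) (hbd z)
    have hx1 : x (n + 1) = T (x n) := Function.iterate_succ_apply' T n p
    show dist (T z) (x (n + 1)) ^ 2 ≤ dist z (x n) ^ 2
    rw [hx1]
    exact pow_le_pow_left₀ dist_nonneg (hT z (x n)) 2
  -- global minimizer of f
  have hmin : ∃ q ∈ (univ : Set N), ∀ y ∈ (univ : Set N), f q ≤ f y := by
    apply exists_minimizer isClosed_univ ⟨p, mem_univ p⟩ f hf0
    · intro a _ b _
      obtain ⟨γ, hγ⟩ := hgeo a b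
      exact ⟨γ (1/2), mem_univ _, fconv a b γ hγ⟩
    · intro u z c _ hu hfc
      have hdzu : Tendsto (fun n => dist z (u n)) atTop (𝓝 0) := by
        have := (tendsto_const_nhds (x := z) (f := atTop)).dist hu
        simpa using this
      have hup : Tendsto (fun n => dist (u n) p) atTop (𝓝 (dist z p)) :=
        hu.dist tendsto_const_nhds
      have hbnd : ∀ n, f z ≤ c + (2 * dist z (u n) * (dist (u n) p + B) + dist z (u n) ^ 2) := by
        intro n
        have key : ∀ m, dist z (x m) ^ 2 ≤ dist (u n) (x m) ^ 2 +
            (2 * dist z (u n) * (dist (u n) p + B) + dist z (u n) ^ 2) := by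
          intro m
          have t1 : dist z (x m) ≤ dist (u n) (x m) + dist z (u n) := by
            have := dist_triangle z (u n) (x m)
            rw [dist_comm z (u n)] at this ⊢
            linarith [dist_triangle z (u n) (x m), dist_comm (u n) z]
          have t2 := hdb (u n) m
          nlinarith [@dist_nonneg _ _ z (x m), @dist_nonneg _ _ (u n) (x m),
            @dist_nonneg _ _ z (u n)]
        have := fle z (u n) _ key
        linarith [hfc n]
      have hlim : Tendsto (fun n => c + (2 * dist z (u n) * (dist (u n) p + B)
          + dist z (u n) ^ 2)) atTop (𝓝 (c + (2 * 0 * (dist z p + B) + 0 ^ 2))) := by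
        apply tendsto_const_nhds.add
        exact ((((hdzu.const_mul 2)).mul (hup.add tendsto_const_nhds)).add (hdzu.pow 2))
      have := ge_of_tendsto' hlim hbnd
      simpa using this
  obtain ⟨q, -, hqmin⟩ := hmin
  -- q is a fixed point
  have hfix : T q = q := by
    by_contra hne
    have hd : 0 < dist q (T q) := dist_pos.2 fun h => hne h.symm
    obtain ⟨γ, hγ⟩ := hgeo q (T q)
    have h1 := fconv q (T q) γ hγ
    have h2 := fshift q
    have h3 := hqmin (γ (1/2)) (mem_univ _)
    nlinarith [pow_pos hd 2]
  -- convexity of the closure of C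
  have hCc : ConvexSubset (closure C) := closure_convex ⟨hgeo, hnpc⟩ hC.1
  -- projection of q onto closure C
  have hproj : ∃ π ∈ closure C, ∀ y ∈ closure C, dist q π ^ 2 ≤ dist q y ^ 2 := by
    apply exists_minimizer isClosed_closure ⟨p, hxC 0⟩ (fun z => dist q z ^ 2)
      (fun z => sq_nonneg _)
    · intro a ha b hb
      obtain ⟨γ, hγ, hγC⟩ := hCc a ha b hb
      refine ⟨γ (1/2), hγC _ hhalf, ?_⟩
      have h1 := hnpc a q b γ hγ (1/2) hhalf
      nlinarith [h1]
    · intro u z c _ hu hfc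
      have : Tendsto (fun n => dist q (u n) ^ 2) atTop (𝓝 (dist q z ^ 2)) :=
        (tendsto_const_nhds.dist hu).pow 2
      exact le_of_tendsto this (Eventually.of_forall hfc)
  obtain ⟨π, hπC, hπmin⟩ := hproj
  -- projection inequality
  have hprojineq : ∀ s ∈ closure C, dist π s ^ 2 ≤ dist q s ^ 2 - dist q π ^ 2 := by
    intro s hs
    obtain ⟨γ, hγ, hγC⟩ := hCc π hπC s hs
    have key : ∀ n : ℕ, (1 - 1/((n:ℝ)+1)) * dist π s ^ 2 ≤ dist q s ^ 2 - dist q π ^ 2 := by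
      intro n
      set t : ℝ := 1/((n:ℝ)+1) with hts
      have ht0 : 0 < t := by positivity
      have ht1 : t ≤ 1 := by
        rw [hts, div_le_one (by positivity)]
        linarith [Nat.cast_nonneg (α := ℝ) n]
      have h1 := hnpc π q s γ hγ t ⟨ht0.le, ht1⟩
      have h2 : dist q π ^ 2 ≤ dist q (γ t) ^ 2 := hπmin (γ t) (hγC t ⟨ht0.le, ht1⟩)
      have h3 : t * ((1 - t) * dist π s ^ 2) ≤ t * (dist q s ^ 2 - dist q π ^ 2) := by
        nlinarith [h1, h2]
      exact le_of_mul_le_mul_left h3 ht0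
    have hseq : Tendsto (fun n : ℕ => (1 - 1/((n:ℝ)+1)) * dist π s ^ 2) atTop
        (𝓝 ((1 - 0) * dist π s ^ 2)) :=
      ((tendsto_const_nhds.sub tendsto_one_div_add_atTop_nhds_zero_nat).mul_const _)
    have := le_of_tendsto hseq (Eventually.of_forall key)
    simpa using this
  -- q equals its projection, hence lies in the closure of C
  have hfπ : f π ≤ f q + -(dist q π ^ 2) := by
    apply fle
    intro n
    have := hprojineq (x n) (hxC n)
    linarith
  have hqπ : f q ≤ f π := hqmin π (mem_univ _)
  have : dist q π = 0 := by
    have h2 : dist q π ^ 2 ≤ 0 := by linarith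
    nlinarith [@dist_nonneg _ _ q π]
  have hqC : q ∈ closure C := by
    rw [show q = π from dist_eq_zero.1 this]
    exact hπC
  exact ⟨q, hqC, hfix⟩
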